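/- arXiv:2512.12845 — 2 statements merged into one kernel-verified Lean document; each statement's English description precedes it below -/
import Mathlib

section
/- For the 2×2 diagonal system x' = A(t)x with A(t) = diag(−ω − a t sin t, ω + a t sin t) and ω > a > 0, the first diagonal component satisfies the bound: for all t ≥ s, exp(∫_s^t (−ω − aτ sin τ) dτ) ≤ e^{2a} e^{−(ω−a)(t−s)} e^{2a|s|}. -/
open Real MeasureTheory intervalIntegral

lemma integral_diag (ω a s t : ℝ) :
    (∫ τ in s..t, (-ω - a * τ * Real.sin τ)) =
      (-ω * t - a * (Real.sin t - t * Real.cos t)) -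
      (-ω * s - a * (Real.sin s - s * Real.cos s)) := by
  apply intervalIntegral.integral_eq_sub_of_hasDerivAt
    (f := fun τ => -ω * τ - a * (Real.sin τ - τ * Real.cos τ))
  · intro x _
    have h : HasDerivAt (fun τ : ℝ => -ω * τ - a * (Real.sin τ - τ * Real.cos τ))
        (-ω * 1 - a * (Real.cos x - (1 * Real.cos x + x * -Real.sin x))) x := by
      exact (((hasDerivAt_id x).const_mul (-ω)).sub
        (((Real.hasDerivAt_sin x).sub
          ((hasDerivAt_id x).mul (Real.hasDerivAt_cos x))).const_mul a))
    convert h using 1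
    · rfl
    · rfl
    · ring
  · apply Continuous.intervalIntegrable
    continuity

/-- for the diagonal coefficient `-ω - a t sin t` with `ω > a > 0`,
for all `t ≥ s`, `exp(∫_s^t (-ω - aτ sin τ) dτ) ≤ e^{2a} e^{-(ω-a)(t-s)} e^{2a|s|}`;
i.e. the scalar evolution admits a nonuniform exponential bound with
`K = e^{2a}`, `α = ω - a`, `ε = 2a`. -/
theorem diagonal_scalar_nonuniform_bound (ω a : ℝ) (ha : 0 < a) (hω : a < ω) :
    ∀ s t : ℝ, s ≤ t →
      Real.exp (∫ τ in s..t, (-ω - a * τ * Real.sin τ)) ≤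
        Real.exp (2 * a) * (Real.exp (-(ω - a) * (t - s)) * Real.exp (2 * a * |s|)) := by
  intro s t hst
  rw [integral_diag, ← Real.exp_add, ← Real.exp_add]
  apply Real.exp_le_exp.mpr
  have h1 : -1 ≤ Real.sin t := Real.neg_one_le_sin t
  have h2 : Real.sin s ≤ 1 := Real.sin_le_one s
  have h3 : t * Real.cos t ≤ |t| := by
    calc t * Real.cos t ≤ |t * Real.cos t| := le_abs_self _
    _ = |t| * |Real.cos t| := abs_mul _ _
    _ ≤ |t| * 1 := by
        exact mul_le_mul_of_nonneg_left (Real.abs_cos_le_one t) (abs_nonneg t)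
    _ = |t| := mul_one _
  have h4 : -(s * Real.cos s) ≤ |s| := by
    calc -(s * Real.cos s) ≤ |s * Real.cos s| := neg_le_abs _
    _ = |s| * |Real.cos s| := abs_mul _ _
    _ ≤ |s| * 1 := mul_le_mul_of_nonneg_left (Real.abs_cos_le_one s) (abs_nonneg s)
    _ = |s| := mul_one _
  have h5 : |t| ≤ (t - s) + |s| := by
    have := abs_sub_abs_le_abs_sub t s
    have : |t - s| = t - s := abs_of_nonneg (by linarith)
    have h := abs_sub_abs_le_abs_sub t s
    linarith
  have key : t * Real.cos t - s * Real.cos s - Real.sin t + Real.sin s ≤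
      2 + (t - s) + 2 * |s| := by linarith
  have := mul_le_mul_of_nonneg_left key ha.le
  nlinarith [abs_nonneg s]
end

section
/- The space M̌ of (equivalence classes of) locally Bochner integrable functions x : ℝ → X with ‖x‖_{M̌} := sup_{t∈ℝ} ∫_t^{t+1} ‖x(s)‖_s ds < ∞ is a Banach space, where {‖·‖_s} is a family of norms each equivalent to the ambient norm with ‖v‖ ≤ ‖v‖_s ≤ C(s)‖v‖, C locally bounded, and s ↦ ‖v‖_s continuous. -/
open Real MeasureTheory
open scoped ENNReal NNReal

section aux
variable {X : Type*} [NormedAddCommGroup X] [NormedSpace ℝ X]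

theorem spaceM_abs_sub_le (N : ℝ → X → ℝ)
    (hadd : ∀ (t : ℝ) (u v : X), N t (u + v) ≤ N t u + N t v)
    (hsmul : ∀ (t : ℝ) (c : ℝ) (v : X), N t (c • v) = |c| * N t v)
    (t : ℝ) (u v : X) : |N t u - N t v| ≤ N t (u - v) := by
  have hneg : ∀ w : X, N t (-w) = N t w := by
    intro w
    have := hsmul t (-1) w
    simpa using this
  have h1 : N t u ≤ N t (u - v) + N t v := by
    have := hadd t (u - v) v
    simpa using this
  have h2 : N t v ≤ N t (u - v) + N t u := by
    have h := hadd t (v - u) u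
    rw [sub_add_cancel] at h
    calc N t v ≤ N t (v - u) + N t u := h
      _ = N t (u - v) + N t u := by rw [← neg_sub u v, hneg]
  rw [abs_sub_le_iff]
  constructor <;> linarith

theorem spaceM_cont (N : ℝ → X → ℝ) (C : ℝ → ℝ)
    (hCloc : ∀ r : ℝ, ∃ M, ∀ t : ℝ, |t| ≤ r → C t ≤ M)
    (hadd : ∀ (t : ℝ) (u v : X), N t (u + v) ≤ N t u + N t v)
    (hsmul : ∀ (t : ℝ) (c : ℝ) (v : X), N t (c • v) = |c| * N t v)
    (hupp : ∀ (t : ℝ) (v : X), N t v ≤ C t * ‖v‖)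
    (hcont : ∀ v : X, Continuous fun t => N t v) :
    Continuous fun p : ℝ × X => N p.1 p.2 := by
  rw [continuous_iff_continuousAt]
  rintro ⟨s₀, v₀⟩
  rw [Metric.continuousAt_iff]
  intro ε hε
  obtain ⟨M, hM⟩ := hCloc (|s₀| + 1)
  set M' := max M 1 with hM'def
  have hM'pos : (0:ℝ) < M' := lt_of_lt_of_le one_pos (le_max_right _ _)
  have h1 : ContinuousAt (fun t => N t v₀) s₀ := (hcont v₀).continuousAt
  rw [Metric.continuousAt_iff] at h1
  obtain ⟨δ₁, hδ₁pos, hδ₁⟩ := h1 (ε/2) (by positivity)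
  refine ⟨min (min δ₁ 1) (ε/(2*M')), by positivity, ?_⟩
  rintro ⟨s, v⟩ hd
  rw [Prod.dist_eq, max_lt_iff] at hd
  obtain ⟨hds, hdv⟩ := hd
  have hs1 : dist s s₀ < δ₁ := lt_of_lt_of_le hds (le_trans (min_le_left _ _) (min_le_left _ _))
  have hs2 : dist s s₀ < 1 := lt_of_lt_of_le hds (le_trans (min_le_left _ _) (min_le_right _ _))
  have hv : dist v v₀ < ε/(2*M') := lt_of_lt_of_le hdv (min_le_right _ _)
  have hCs : C s ≤ M' := by
    refine le_trans (hM s ?_) (le_max_left _ _)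
    rw [Real.dist_eq] at hs2
    have := abs_sub_abs_le_abs_sub s s₀
    linarith
  have key : dist (N s v) (N s v₀) ≤ M' * dist v v₀ := by
    rw [Real.dist_eq, dist_eq_norm]
    calc |N s v - N s v₀| ≤ N s (v - v₀) := spaceM_abs_sub_le N hadd hsmul s v v₀
      _ ≤ C s * ‖v - v₀‖ := hupp s _
      _ ≤ M' * ‖v - v₀‖ := mul_le_mul_of_nonneg_right hCs (norm_nonneg _)
  calc dist (N s v) (N s₀ v₀) ≤ dist (N s v) (N s v₀) + dist (N s v₀) (N s₀ v₀) := dist_triangle _ _ _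
    _ < M' * (ε/(2*M')) + ε/2 := by
        have h2 := hδ₁ hs1
        have : M' * dist v v₀ < M' * (ε/(2*M')) := mul_lt_mul_of_pos_left hv hM'pos
        linarith
    _ = ε := by field_simp; ring

end aux

/-- the space `M̌` of (classes of) locally Bochner integrable `x : ℝ → X`
with `‖x‖_{M̌} = sup_t ∫_t^{t+1} ‖x(s)‖_s ds < ∞` is complete: every Cauchy sequence in
the `M̌`-norm converges (in the `M̌`-norm) to an element of `M̌`; here `{‖·‖_s}` is a
family of norms with `‖v‖ ≤ ‖v‖_s ≤ C(s)‖v‖`, `C : ℝ → [1,∞)` locally bounded, and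
`s ↦ ‖v‖_s` continuous, and functions are identified when equal almost everywhere. -/
theorem spaceM_complete {X : Type*} [NormedAddCommGroup X] [NormedSpace ℝ X]
    [CompleteSpace X]
    (N : ℝ → X → ℝ) (C : ℝ → ℝ)
    (hC1 : ∀ t, 1 ≤ C t)
    (hCloc : ∀ r : ℝ, ∃ M, ∀ t : ℝ, |t| ≤ r → C t ≤ M)
    (hadd : ∀ (t : ℝ) (u v : X), N t (u + v) ≤ N t u + N t v)
    (hsmul : ∀ (t : ℝ) (c : ℝ) (v : X), N t (c • v) = |c| * N t v)
    (hlow : ∀ (t : ℝ) (v : X), ‖v‖ ≤ N t v)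
    (hupp : ∀ (t : ℝ) (v : X), N t v ≤ C t * ‖v‖)
    (hcont : ∀ v : X, Continuous fun t => N t v)
    (f : ℕ → ℝ → X)
    (hfloc : ∀ n, LocallyIntegrable (f n) volume)
    (hfint : ∀ n, ∀ t : ℝ, IntegrableOn (fun s => N s (f n s)) (Set.Ioc t (t + 1)))
    (hfb : ∀ n, ∃ b, ∀ t : ℝ, ∫ s in Set.Ioc t (t + 1), N s (f n s) ≤ b)
    (hcauchy : ∀ δ > (0 : ℝ), ∃ n₀ : ℕ, ∀ m ≥ n₀, ∀ n ≥ n₀, ∀ t : ℝ,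
      ∫ s in Set.Ioc t (t + 1), N s (f m s - f n s) ≤ δ) :
    ∃ x : ℝ → X, LocallyIntegrable x volume ∧
      (∀ t : ℝ, IntegrableOn (fun s => N s (x s)) (Set.Ioc t (t + 1))) ∧
      (∃ b, ∀ t : ℝ, ∫ s in Set.Ioc t (t + 1), N s (x s) ≤ b) ∧
      ∀ δ > (0 : ℝ), ∃ n₀ : ℕ, ∀ n ≥ n₀, ∀ t : ℝ,
        ∫ s in Set.Ioc t (t + 1), N s (f n s - x s) ≤ δ := by
  classical
  have hNcont : Continuous fun p : ℝ × X => N p.1 p.2 :=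
    spaceM_cont N C hCloc hadd hsmul hupp hcont
  have hNneg : ∀ (t : ℝ) (v : X), N t (-v) = N t v := fun t v => by
    simpa using hsmul t (-1) v
  have hN0 : ∀ (t : ℝ) (v : X), 0 ≤ N t v := fun t v => (norm_nonneg v).trans (hlow t v)
  have hmeas : ∀ {g : ℝ → X} {μ : Measure ℝ}, AEStronglyMeasurable g μ →
      AEStronglyMeasurable (fun s => N s (g s)) μ := fun hg =>
    hNcont.comp_aestronglyMeasurable (aestronglyMeasurable_id.prodMk hg)
  have hfm : ∀ n, AEStronglyMeasurable (f n) volume := fun n => (hfloc n).aestronglyMeasurable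
  -- integrability of N s (f m s - f n s)
  have hfmn_int : ∀ m n (t : ℝ), IntegrableOn (fun s => N s (f m s - f n s)) (Set.Ioc t (t+1)) := by
    intro m n t
    have hms : AEStronglyMeasurable (fun s => f m s - f n s)
        (volume.restrict (Set.Ioc t (t+1))) := ((hfm m).sub (hfm n)).restrict
    refine Integrable.mono' ((hfint m t).add (hfint n t)) (hmeas hms) ?_
    filter_upwards with s
    rw [Real.norm_eq_abs, abs_of_nonneg (hN0 _ _)]
    calc N s (f m s - f n s) ≤ N s (f m s) + N s (-(f n s)) := by
          simpa [sub_eq_add_neg] using hadd s (f m s) (-(f n s))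
      _ = N s (f m s) + N s (f n s) := by rw [hNneg]
  -- lintegral = ofReal integral, for nonneg integrable N-compositions
  have hJeq : ∀ {g : ℝ → X} {t : ℝ}, IntegrableOn (fun s => N s (g s)) (Set.Ioc t (t+1)) →
      ENNReal.ofReal (∫ s in Set.Ioc t (t+1), N s (g s))
        = ∫⁻ s in Set.Ioc t (t+1), ENNReal.ofReal (N s (g s)) := fun hg =>
    ofReal_integral_eq_lintegral_ofReal hg (ae_of_all _ fun s => hN0 s _)
  have hcauchyL : ∀ δ > (0:ℝ), ∃ n₀ : ℕ, ∀ m ≥ n₀, ∀ n ≥ n₀, ∀ t : ℝ,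
      ∫⁻ s in Set.Ioc t (t+1), ENNReal.ofReal (N s (f m s - f n s)) ≤ ENNReal.ofReal δ := by
    intro δ hδ
    obtain ⟨n₀, hn₀⟩ := hcauchy δ hδ
    refine ⟨n₀, fun m hm n hn t => ?_⟩
    rw [← hJeq (hfmn_int m n t)]
    exact ENNReal.ofReal_le_ofReal (hn₀ m hm n hn t)
  -- rapidly Cauchy subsequence
  obtain ⟨ψ, hψmono, hψ⟩ : ∃ ψ : ℕ → ℕ, StrictMono ψ ∧ ∀ k, ∀ m ≥ ψ k, ∀ t : ℝ,
      ∫⁻ s in Set.Ioc t (t+1), ENNReal.ofReal (N s (f m s - f (ψ k) s))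
        ≤ ENNReal.ofReal ((1/2:ℝ)^k) := by
    have hpos : ∀ k : ℕ, (0:ℝ) < (1/2:ℝ)^k := fun k => by positivity
    choose φ hφ using fun k => hcauchyL ((1/2:ℝ)^k) (hpos k)
    let ψ : ℕ → ℕ := fun k => Nat.rec (φ 0) (fun k ih => max (φ (k+1)) (ih + 1)) k
    have hψsucc : ∀ k, ψ k < ψ (k+1) := fun k =>
      lt_of_lt_of_le (Nat.lt_succ_self _) (le_max_right _ _)
    have hψφ : ∀ k, φ k ≤ ψ k := by
      intro k
      cases k with
      | zero => exact le_rfl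
      | succ k => exact le_max_left _ _
    refine ⟨ψ, strictMono_nat_of_lt_succ hψsucc, fun k m hm t => ?_⟩
    exact hφ k m (le_trans (hψφ k) hm) (ψ k) (hψφ k) t
  -- a.e. summability of the telescoping series on each unit interval
  have hae : ∀ j : ℤ, ∀ᵐ s ∂(volume.restrict (Set.Ioc (j:ℝ) (j+1))),
      Summable fun k => f (ψ (k+1)) s - f (ψ k) s := by
    intro j
    have hm : ∀ k : ℕ, AEMeasurable (fun s => (‖f (ψ (k+1)) s - f (ψ k) s‖₊ : ℝ≥0∞))
        (volume.restrict (Set.Ioc (j:ℝ) (j+1))) :=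
      fun k => ((hfm _).sub (hfm _)).restrict.nnnorm.aemeasurable.coe_nnreal_ennreal
    have hb : ∀ k : ℕ, ∫⁻ s in Set.Ioc (j:ℝ) (j+1), (‖f (ψ (k+1)) s - f (ψ k) s‖₊ : ℝ≥0∞)
        ≤ ENNReal.ofReal ((1/2:ℝ)^k) := by
      intro k
      refine le_trans (lintegral_mono fun s => ?_) (hψ k (ψ (k+1)) (hψmono (Nat.lt_succ_self k)).le (j:ℝ))
      rw [← ENNReal.ofReal_coe_nnreal, coe_nnnorm]
      exact ENNReal.ofReal_le_ofReal (hlow s _)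
    have hsumfin : ∫⁻ s in Set.Ioc (j:ℝ) (j+1),
        ∑' k : ℕ, (‖f (ψ (k+1)) s - f (ψ k) s‖₊ : ℝ≥0∞) ≠ ⊤ := by
      rw [lintegral_tsum hm]
      have hle := ENNReal.tsum_le_tsum hb
      refine ne_top_of_le_ne_top ?_ hle
      rw [← ENNReal.ofReal_tsum_of_nonneg (fun k => by positivity)
        (summable_geometric_of_lt_one (by norm_num) (by norm_num))]
      exact ENNReal.ofReal_ne_top
    have hfin := ae_lt_top' (AEMeasurable.ennreal_tsum hm) hsumfin
    filter_upwards [hfin] with s hs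
    have h1 : Summable fun k => ‖f (ψ (k+1)) s - f (ψ k) s‖₊ :=
      ENNReal.tsum_coe_ne_top_iff_summable.1 hs.ne
    exact Summable.of_nnnorm h1
  -- globalize
  have haeG : ∀ᵐ s : ℝ, Summable fun k => f (ψ (k+1)) s - f (ψ k) s := by
    rw [ae_iff]
    set A := {s : ℝ | ¬ Summable fun k => f (ψ (k+1)) s - f (ψ k) s} with hA
    have hcover : A ⊆ ⋃ j : ℤ, A ∩ Set.Ioc (j:ℝ) (j+1) := by
      intro s hs
      have hmem : s ∈ ⋃ j : ℤ, Set.Ioc (j:ℝ) (j+1) := by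
        rw [iUnion_Ioc_intCast]; trivial
      obtain ⟨j, hj⟩ := Set.mem_iUnion.1 hmem
      exact Set.mem_iUnion.2 ⟨j, hs, hj⟩
    refine measure_mono_null hcover (measure_iUnion_null fun j => ?_)
    rw [← Measure.restrict_apply' measurableSet_Ioc]
    exact ae_iff.1 (hae j)
  -- define the limit function
  set x : ℝ → X := fun s =>
    if h : ∃ y, Filter.Tendsto (fun k => f (ψ k) s) Filter.atTop (nhds y) then h.choose else 0
    with hxdef
  have hxlim : ∀ᵐ s : ℝ, Filter.Tendsto (fun k => f (ψ k) s) Filter.atTop (nhds (x s)) := by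
    filter_upwards [haeG] with s hs
    have hex : ∃ y, Filter.Tendsto (fun k => f (ψ k) s) Filter.atTop (nhds y) := by
      refine ⟨(∑' k, (f (ψ (k+1)) s - f (ψ k) s)) + f (ψ 0) s, ?_⟩
      have h1 := hs.hasSum.tendsto_sum_nat
      have heq : (fun K => f (ψ K) s)
          = fun K => (∑ k ∈ Finset.range K, (f (ψ (k+1)) s - f (ψ k) s)) + f (ψ 0) s := by
        funext K
        rw [Finset.sum_range_sub (fun k => f (ψ k) s) K]
        abel
      rw [heq]
      exact h1.add tendsto_const_nhds
    simp only [hxdef, dif_pos hex]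
    exact hex.choose_spec
  have hxm : AEStronglyMeasurable x volume :=
    aestronglyMeasurable_of_tendsto_ae Filter.atTop (fun k => hfm (ψ k)) hxlim
  -- key Fatou estimate
  have hkey : ∀ δ > (0:ℝ), ∃ n₀ : ℕ, ∀ m ≥ n₀, ∀ t : ℝ,
      ∫⁻ s in Set.Ioc t (t+1), ENNReal.ofReal (N s (f m s - x s)) ≤ ENNReal.ofReal δ := by
    intro δ hδ
    obtain ⟨n₀, hn₀⟩ := hcauchyL δ hδ
    refine ⟨n₀, fun m hm t => ?_⟩
    have hptw : ∀ᵐ s ∂(volume.restrict (Set.Ioc t (t+1))),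
        ENNReal.ofReal (N s (f m s - x s))
          = Filter.liminf (fun k => ENNReal.ofReal (N s (f m s - f (ψ k) s))) Filter.atTop := by
      filter_upwards [ae_restrict_of_ae hxlim] with s hs
      have hc : Continuous fun v : X => N s (f m s - v) :=
        hNcont.comp (continuous_const.prodMk (continuous_const.sub continuous_id))
      have h1 : Filter.Tendsto (fun k => N s (f m s - f (ψ k) s)) Filter.atTop
          (nhds (N s (f m s - x s))) := (hc.tendsto _).comp hs
      have h2 : Filter.Tendsto (fun k => ENNReal.ofReal (N s (f m s - f (ψ k) s)))
          Filter.atTop (nhds (ENNReal.ofReal (N s (f m s - x s)))) :=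
        (ENNReal.continuous_ofReal.tendsto _).comp h1
      exact h2.liminf_eq.symm
    rw [lintegral_congr_ae hptw]
    refine le_trans (lintegral_liminf_le' fun k =>
      ((hmeas ((hfm m).sub (hfm (ψ k))).restrict).aemeasurable).ennreal_ofReal) ?_
    have hev : ∀ᶠ k in Filter.atTop,
        (∫⁻ s in Set.Ioc t (t+1), ENNReal.ofReal (N s (f m s - f (ψ k) s)))
          ≤ ENNReal.ofReal δ := by
      filter_upwards [Filter.eventually_ge_atTop n₀] with k hk
      exact hn₀ m hm (ψ k) (le_trans hk (hψmono.le_apply)) t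
    calc Filter.liminf (fun k => ∫⁻ s in Set.Ioc t (t+1),
            ENNReal.ofReal (N s (f m s - f (ψ k) s))) Filter.atTop
        ≤ Filter.liminf (fun _ : ℕ => ENNReal.ofReal δ) Filter.atTop :=
          Filter.liminf_le_liminf hev
      _ = ENNReal.ofReal δ := Filter.liminf_const _
  -- fix a reference index m₀ with lintegral bound 1
  obtain ⟨m₀, hm₀⟩ := hkey 1 one_pos
  have hm₀1 : ∀ t : ℝ, ∫⁻ s in Set.Ioc t (t+1), ENNReal.ofReal (N s (f m₀ s - x s))
      ≤ ENNReal.ofReal 1 := hm₀ m₀ le_rfl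
  -- integrability of N s (f n s - x s)
  have hNfx_int : ∀ n (t : ℝ), IntegrableOn (fun s => N s (f n s - x s)) (Set.Ioc t (t+1)) := by
    intro n t
    have hms : AEStronglyMeasurable (fun s => N s (f n s - x s))
        (volume.restrict (Set.Ioc t (t+1))) := hmeas ((hfm n).sub hxm).restrict
    refine ⟨hms, ?_⟩
    rw [hasFiniteIntegral_iff_ofReal (ae_of_all _ fun s => hN0 s _)]
    have hsplit : ∀ s : ℝ, N s (f n s - x s) ≤ N s (f n s - f m₀ s) + N s (f m₀ s - x s) := by
      intro s
      have := hadd s (f n s - f m₀ s) (f m₀ s - x s)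
      simpa using this
    calc ∫⁻ s in Set.Ioc t (t+1), ENNReal.ofReal (N s (f n s - x s))
        ≤ ∫⁻ s in Set.Ioc t (t+1),
            (ENNReal.ofReal (N s (f n s - f m₀ s)) + ENNReal.ofReal (N s (f m₀ s - x s))) := by
          refine lintegral_mono fun s => ?_
          exact le_trans (ENNReal.ofReal_le_ofReal (hsplit s)) (ENNReal.ofReal_add_le)
      _ = (∫⁻ s in Set.Ioc t (t+1), ENNReal.ofReal (N s (f n s - f m₀ s)))
            + ∫⁻ s in Set.Ioc t (t+1), ENNReal.ofReal (N s (f m₀ s - x s)) :=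
          lintegral_add_left' (((hmeas ((hfm n).sub (hfm m₀)).restrict).aemeasurable).ennreal_ofReal) _
      _ < ⊤ := by
          have h1 : (∫⁻ s in Set.Ioc t (t+1), ENNReal.ofReal (N s (f n s - f m₀ s))) ≠ ⊤ := by
            rw [← hJeq (hfmn_int n m₀ t)]
            exact ENNReal.ofReal_ne_top
          have h2 : (∫⁻ s in Set.Ioc t (t+1), ENNReal.ofReal (N s (f m₀ s - x s))) ≠ ⊤ :=
            ne_top_of_le_ne_top ENNReal.ofReal_ne_top (hm₀1 t)
          exact ENNReal.add_lt_top.2 ⟨h1.lt_top, h2.lt_top⟩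
  -- integrability of N s (x s)
  have hNx_int : ∀ t : ℝ, IntegrableOn (fun s => N s (x s)) (Set.Ioc t (t+1)) := by
    intro t
    refine Integrable.mono' ((hNfx_int m₀ t).add (hfint m₀ t)) (hmeas hxm.restrict) ?_
    filter_upwards with s
    simp only [Pi.add_apply]
    rw [Real.norm_eq_abs, abs_of_nonneg (hN0 _ _)]
    have h := hadd s (x s - f m₀ s) (f m₀ s)
    rw [sub_add_cancel] at h
    have hflip : N s (x s - f m₀ s) = N s (f m₀ s - x s) := by
      rw [← hNneg s (x s - f m₀ s), neg_sub]
    linarith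
  -- integrability of x on unit intervals
  have hx_int : ∀ t : ℝ, IntegrableOn x (Set.Ioc t (t+1)) := by
    intro t
    refine Integrable.mono' (hNx_int t) hxm.restrict ?_
    filter_upwards with s
    simpa using hlow s (x s)
  -- local integrability
  have hx_int' : ∀ (a : ℝ) (n : ℕ), IntegrableOn x (Set.Ioc a (a + n)) := by
    intro a n
    induction n with
    | zero => simp
    | succ n ih =>
        have : Set.Ioc a (a + (n+1 : ℕ)) ⊆ Set.Ioc a (a + n) ∪ Set.Ioc (a + n) (a + n + 1) := by
          push_cast
          rw [Set.Ioc_union_Ioc_eq_Ioc (by linarith [Nat.cast_nonneg (α := ℝ) n]) (by linarith)]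
          intro s hs
          push_cast at hs ⊢
          constructor <;> [exact hs.1; linarith [hs.2]]
        exact (ih.union (hx_int (a + n))).mono_set this
  have hxloc : LocallyIntegrable x volume := by
    rw [locallyIntegrable_iff]
    intro K hK
    obtain ⟨r, hr⟩ := hK.isBounded.subset_closedBall 0
    have hrK : K ⊆ Set.Ioc (-r - 1) ((-r - 1) + (⌈2 * r + 1⌉₊ : ℕ)) := by
      intro s hs
      have := hr hs
      rw [Metric.mem_closedBall, Real.dist_eq, abs_le] at this
      constructor
      · linarith [this.1]
      · have h2 : (2*r + 1 : ℝ) ≤ ⌈2*r+1⌉₊ := Nat.le_ceil _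
        linarith [this.2]
    exact (hx_int' (-r - 1) _).mono_set hrK
  -- the uniform bound
  obtain ⟨b₀, hb₀⟩ := hfb m₀
  have hfxle1 : ∀ t : ℝ, ∫ s in Set.Ioc t (t+1), N s (f m₀ s - x s) ≤ 1 := by
    intro t
    have := hm₀1 t
    rw [← hJeq (hNfx_int m₀ t)] at this
    exact (ENNReal.ofReal_le_ofReal_iff one_pos.le).1 this
  have hbound : ∀ t : ℝ, ∫ s in Set.Ioc t (t+1), N s (x s) ≤ 1 + b₀ := by
    intro t
    have hptw : ∀ s : ℝ, N s (x s) ≤ N s (f m₀ s - x s) + N s (f m₀ s) := by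
      intro s
      have h := hadd s (x s - f m₀ s) (f m₀ s)
      rw [sub_add_cancel] at h
      have hflip : N s (x s - f m₀ s) = N s (f m₀ s - x s) := by
        rw [← hNneg s (x s - f m₀ s), neg_sub]
      linarith
    calc ∫ s in Set.Ioc t (t+1), N s (x s)
        ≤ ∫ s in Set.Ioc t (t+1), (N s (f m₀ s - x s) + N s (f m₀ s)) :=
          integral_mono (hNx_int t) ((hNfx_int m₀ t).add (hfint m₀ t)) hptw
      _ = (∫ s in Set.Ioc t (t+1), N s (f m₀ s - x s)) + ∫ s in Set.Ioc t (t+1), N s (f m₀ s) :=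
          integral_add (hNfx_int m₀ t) (hfint m₀ t)
      _ ≤ 1 + b₀ := add_le_add (hfxle1 t) (hb₀ t)
  -- conclusion
  refine ⟨x, hxloc, hNx_int, ⟨1 + b₀, hbound⟩, ?_⟩
  intro δ hδ
  obtain ⟨n₀, hn₀⟩ := hkey δ hδ
  refine ⟨n₀, fun n hn t => ?_⟩
  have := hn₀ n hn t
  rw [← hJeq (hNfx_int n t)] at this
  exact (ENNReal.ofReal_le_ofReal_iff hδ.le).1 this
end
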